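/- Let M ∈ GSp₄(F₂) satisfy tr(M) = 0. Then the characteristic polynomial of M over F₂ is either (t+1)⁴ or (t²+t+1)². -/

import Mathlib

open Matrix Polynomial

/-- The standard symplectic form `[[0, I₂], [−I₂, 0]]` on `F⁴`. -/
def J4 (F : Type*) [CommRing F] : Matrix (Fin 4) (Fin 4) F :=
  !![0, 0, 1, 0;
     0, 0, 0, 1;
     -1, 0, 0, 0;
     0, -1, 0, 0]

lemma two_eq_zero_poly : (2 : (ZMod 2)[X]) = 0 := by
  have : (2:(ZMod 2)[X]) = 1 + 1 := by norm_num
  rw [this, ← C_1, ← C_add]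
  norm_num
  rfl

/-- If `M ∈ GSp₄(F₂)` has trace `0`, then its characteristic polynomial is either
`(t+1)⁴` or `(t²+t+1)²`. -/
theorem charpoly_of_trace_zero_gsp4_f2
    (M : Matrix (Fin 4) (Fin 4) (ZMod 2)) (μ : ZMod 2)
    (hM : IsUnit M.det) (hμ : μ ≠ 0)
    (hsymp : Mᵀ * J4 (ZMod 2) * M = μ • J4 (ZMod 2))
    (htr : M.trace = 0) :
    M.charpoly = (X + 1) ^ 4 ∨ M.charpoly = (X ^ 2 + X + 1) ^ 2 := by
  have hμ1 : μ = 1 := (by decide : ∀ x : ZMod 2, x ≠ 0 → x = 1) μ hμ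
  subst hμ1
  rw [one_smul] at hsymp
  have hdet : M.det = 1 := (by decide : ∀ x : ZMod 2, IsUnit x → x = 1) _ hM
  have hJJ : J4 (ZMod 2) * J4 (ZMod 2) = 1 := by decide
  have hinvl : (J4 (ZMod 2) * Mᵀ * J4 (ZMod 2)) * M = 1 := by
    rw [mul_assoc, mul_assoc, ← mul_assoc Mᵀ, hsymp, hJJ]
  have hMinv : M⁻¹ = J4 (ZMod 2) * Mᵀ * J4 (ZMod 2) := Matrix.inv_eq_left_inv hinvl
  have htrinv : (M⁻¹).trace = 0 := by
    rw [hMinv, Matrix.trace_mul_cycle, hJJ, one_mul, Matrix.trace_transpose]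
    exact htr
  have hMM : M * M⁻¹ = 1 := Matrix.mul_nonsing_inv M (by rw [hdet]; exact isUnit_one)
  -- charpoly of the inverse is the reversed charpoly
  have key : (M.map C) * (charmatrix M⁻¹) =
      -(1 - (X : (ZMod 2)[X]) • (M.map C)) := by
    rw [charmatrix, Matrix.mul_sub, RingHom.mapMatrix_apply,
      ← (scalar_commute (X : (ZMod 2)[X]) (fun r' => Commute.all _ _) (M.map C)).eq,
      scalar_apply, ← smul_eq_diagonal_mul, ← Matrix.map_mul, hMM,
      Matrix.map_one _ (map_zero C) (map_one C), neg_sub]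
  have hinvcp : (M⁻¹).charpoly = M.charpolyRev := by
    have hdetmap : (M.map C).det = 1 := by
      rw [← RingHom.mapMatrix_apply, ← RingHom.map_det, hdet, C_1]
    have := congrArg Matrix.det key
    rw [Matrix.det_mul, hdetmap, one_mul, Matrix.det_neg] at this
    norm_num at this
    exact this
  have hdeg : M.charpoly.natDegree = 4 := by
    simp
  have hc3 : M.charpoly.coeff 3 = 0 := by
    have h := Matrix.trace_eq_neg_charpoly_coeff M
    rw [htr] at h
    simpa using h.symm
  have hc1 : M.charpoly.coeff 1 = 0 := by
    have h3 : M.charpoly.reverse.coeff 3 = M.charpoly.coeff 1 := by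
      rw [Polynomial.coeff_reverse, hdeg]
      norm_num [Polynomial.revAt_le]
    have h := Matrix.trace_eq_neg_charpoly_coeff M⁻¹
    rw [htrinv] at h
    have h' : (M⁻¹).charpoly.coeff 3 = 0 := by simpa using h.symm
    rw [← h3, M.reverse_charpoly, ← hinvcp, h']
  have hc0 : M.charpoly.coeff 0 = 1 := by
    have h := Matrix.det_eq_sign_charpoly_coeff M
    rw [hdet] at h
    norm_num at h
    exact h.symm
  have hc4 : M.charpoly.coeff 4 = 1 := by
    have h := M.charpoly_monic
    rw [Polynomial.Monic, Polynomial.leadingCoeff, hdeg] at h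
    exact h
  set c := M.charpoly.coeff 2 with hc
  have hp : M.charpoly = X ^ 4 + C c * X ^ 2 + 1 := by
    ext n
    simp only [coeff_add, coeff_X_pow, coeff_C_mul, coeff_one]
    match n with
    | 0 => simpa using hc0
    | 1 => simpa using hc1
    | 2 => simp [hc]
    | 3 => simpa using hc3
    | 4 => simpa using hc4
    | (n+5) =>
      rw [Polynomial.coeff_eq_zero_of_natDegree_lt (by omega : M.charpoly.natDegree < n + 5)]
      have h1 : ¬ (n + 5 = 4) := by omega
      have h2 : ¬ (n + 5 = 2) := by omega
      have h3 : ¬ (n + 5 = 0) := by omega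
      simp [h1, h2, h3]
  have h2 := two_eq_zero_poly
  rcases (by decide : ∀ x : ZMod 2, x = 0 ∨ x = 1) c with h | h
  · left
    rw [hp, h, map_zero]
    linear_combination (-2*X^3 - 3*X^2 - 2*X : (ZMod 2)[X]) * h2
  · right
    rw [hp, h, C_1]
    linear_combination (-X^3 - X^2 - X : (ZMod 2)[X]) * h2
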